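/- Let C be a copula and let F and G be univariate distribution functions (each nondecreasing, right-continuous, with limit 0 at −∞ and limit 1 at +∞). Then there exists a probability measure μ on ℝ² such that μ((−∞,x] × (−∞,y]) = C(F(x), G(y)) for all real x, y; moreover the two marginal measures of μ have distribution functions F and G respectively. -/

import Mathlib

open MeasureTheory Set Filter
open scoped ENNReal NNReal Topology

/-- A (bivariate) copula. -/
def IsCopula (C : ℝ → ℝ → ℝ) : Prop :=
  (∀ u ∈ Icc (0:ℝ) 1, ∀ v ∈ Icc (0:ℝ) 1, C u v ∈ Icc (0:ℝ) 1) ∧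
  (∀ u ∈ Icc (0:ℝ) 1, C u 0 = 0 ∧ C u 1 = u) ∧
  (∀ v ∈ Icc (0:ℝ) 1, C 0 v = 0 ∧ C 1 v = v) ∧
  (∀ u₁ ∈ Icc (0:ℝ) 1, ∀ u₂ ∈ Icc (0:ℝ) 1, ∀ v₁ ∈ Icc (0:ℝ) 1, ∀ v₂ ∈ Icc (0:ℝ) 1,
    u₁ ≤ u₂ → v₁ ≤ v₂ → 0 ≤ C u₂ v₂ - C u₂ v₁ - C u₁ v₂ + C u₁ v₁)

/-- A univariate distribution function: nondecreasing, right-continuous, with values in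
`[0,1]`, tending to `0` at `-∞` and to `1` at `+∞`. -/
def IsDistFun (F : ℝ → ℝ) : Prop :=
  Monotone F ∧ (∀ x, ContinuousWithinAt F (Ici x) x) ∧
  (∀ x, F x ∈ Icc (0:ℝ) 1) ∧
  Tendsto F atBot (nhds 0) ∧ Tendsto F atTop (nhds 1)

namespace SklarAux

variable {C : ℝ → ℝ → ℝ} {F G : ℝ → ℝ}

lemma mono_u (hC : IsCopula C) {u₁ u₂ v : ℝ} (h1 : u₁ ∈ Icc (0:ℝ) 1)
    (h2 : u₂ ∈ Icc (0:ℝ) 1) (hv : v ∈ Icc (0:ℝ) 1) (h : u₁ ≤ u₂) :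
    C u₁ v ≤ C u₂ v := by
  have hr := hC.2.2.2 u₁ h1 u₂ h2 0 ⟨le_refl 0, zero_le_one⟩ v hv h hv.1
  have e1 := (hC.2.1 u₁ h1).1
  have e2 := (hC.2.1 u₂ h2).1
  linarith

lemma lip_u (hC : IsCopula C) {u₁ u₂ v : ℝ} (h1 : u₁ ∈ Icc (0:ℝ) 1)
    (h2 : u₂ ∈ Icc (0:ℝ) 1) (hv : v ∈ Icc (0:ℝ) 1) (h : u₁ ≤ u₂) :
    C u₂ v - C u₁ v ≤ u₂ - u₁ := by
  have hr := hC.2.2.2 u₁ h1 u₂ h2 v hv 1 ⟨zero_le_one, le_refl 1⟩ h hv.2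
  have e1 := (hC.2.1 u₁ h1).2
  have e2 := (hC.2.1 u₂ h2).2
  linarith

lemma mono_v (hC : IsCopula C) {u v₁ v₂ : ℝ} (hu : u ∈ Icc (0:ℝ) 1)
    (h1 : v₁ ∈ Icc (0:ℝ) 1) (h2 : v₂ ∈ Icc (0:ℝ) 1) (h : v₁ ≤ v₂) :
    C u v₁ ≤ C u v₂ := by
  have hr := hC.2.2.2 0 ⟨le_refl 0, zero_le_one⟩ u hu v₁ h1 v₂ h2 hu.1 h
  have e1 := (hC.2.2.1 v₁ h1).1
  have e2 := (hC.2.2.1 v₂ h2).1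
  linarith

lemma lip_v (hC : IsCopula C) {u v₁ v₂ : ℝ} (hu : u ∈ Icc (0:ℝ) 1)
    (h1 : v₁ ∈ Icc (0:ℝ) 1) (h2 : v₂ ∈ Icc (0:ℝ) 1) (h : v₁ ≤ v₂) :
    C u v₂ - C u v₁ ≤ v₂ - v₁ := by
  have hr := hC.2.2.2 u hu 1 ⟨zero_le_one, le_refl 1⟩ v₁ h1 v₂ h2 hu.2 h
  have e1 := (hC.2.2.1 v₁ h1).2
  have e2 := (hC.2.2.1 v₂ h2).2
  linarith

lemma c_nonneg (hC : IsCopula C) {u v : ℝ} (hu : u ∈ Icc (0:ℝ) 1)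
    (hv : v ∈ Icc (0:ℝ) 1) : 0 ≤ C u v := (hC.1 u hu v hv).1

/-- The Stieltjes function associated to a distribution function. -/
def distSF (hF : IsDistFun F) : StieltjesFunction ℝ where
  toFun := F
  mono' := hF.1
  right_continuous' := hF.2.1

@[simp] lemma distSF_apply (hF : IsDistFun F) (x : ℝ) : distSF hF x = F x := rfl

/-- Right-continuity of `x ↦ C (F x) v`. -/
lemma cont_comp (hC : IsCopula C) (hF : IsDistFun F) {v : ℝ} (hv : v ∈ Icc (0:ℝ) 1) (x : ℝ) :
    ContinuousWithinAt (fun y => C (F y) v) (Ici x) x := by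
  obtain ⟨Fm, Frc, F01, _, _⟩ := hF
  have hlow : ∀ᶠ y in nhdsWithin x (Ici x), C (F x) v ≤ C (F y) v := by
    filter_upwards [self_mem_nhdsWithin] with y (hy : x ≤ y)
    exact mono_u hC (F01 x) (F01 y) hv (Fm hy)
  have hhigh : ∀ᶠ y in nhdsWithin x (Ici x), C (F y) v ≤ C (F x) v + (F y - F x) := by
    filter_upwards [self_mem_nhdsWithin] with y (hy : x ≤ y)
    have := lip_u hC (F01 x) (F01 y) hv (Fm hy)
    linarith
  have h2 : Tendsto (fun y => C (F x) v + (F y - F x)) (nhdsWithin x (Ici x)) (nhds (C (F x) v)) := by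
    have : Tendsto (fun y => F y - F x) (nhdsWithin x (Ici x)) (nhds 0) := by
      simpa using (Frc x).sub_const (F x)
    simpa using (tendsto_const_nhds (x := C (F x) v)).add this
  exact tendsto_of_tendsto_of_tendsto_of_le_of_le' tendsto_const_nhds h2 hlow hhigh

/-- Right-continuity of `y ↦ C u (G y)`. -/
lemma cont_comp' (hC : IsCopula C) (hG : IsDistFun G) {u : ℝ} (hu : u ∈ Icc (0:ℝ) 1) (x : ℝ) :
    ContinuousWithinAt (fun y => C u (G y)) (Ici x) x := by
  obtain ⟨Gm, Grc, G01, _, _⟩ := hG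
  have hlow : ∀ᶠ y in nhdsWithin x (Ici x), C u (G x) ≤ C u (G y) := by
    filter_upwards [self_mem_nhdsWithin] with y (hy : x ≤ y)
    exact mono_v hC hu (G01 x) (G01 y) (Gm hy)
  have hhigh : ∀ᶠ y in nhdsWithin x (Ici x), C u (G y) ≤ C u (G x) + (G y - G x) := by
    filter_upwards [self_mem_nhdsWithin] with y (hy : x ≤ y)
    have := lip_v hC hu (G01 x) (G01 y) (Gm hy)
    linarith
  have h2 : Tendsto (fun y => C u (G x) + (G y - G x)) (nhdsWithin x (Ici x)) (nhds (C u (G x))) := by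
    have : Tendsto (fun y => G y - G x) (nhdsWithin x (Ici x)) (nhds 0) := by
      simpa using (Grc x).sub_const (G x)
    simpa using (tendsto_const_nhds (x := C u (G x))).add this
  exact tendsto_of_tendsto_of_tendsto_of_le_of_le' tendsto_const_nhds h2 hlow hhigh

/-- The Stieltjes function `x ↦ C (F x) (G q)`. -/
noncomputable def psi (hC : IsCopula C) (hF : IsDistFun F) (hG : IsDistFun G) (q : ℚ) :
    StieltjesFunction ℝ where
  toFun := fun x => C (F x) (G q)
  mono' := fun a b hab => mono_u hC (hF.2.2.1 a) (hF.2.2.1 b) (hG.2.2.1 q) (hF.1 hab)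
  right_continuous' := fun x => cont_comp hC hF (hG.2.2.1 q) x

@[simp] lemma psi_apply (hC : IsCopula C) (hF : IsDistFun F) (hG : IsDistFun G) (q : ℚ) (x : ℝ) :
    psi hC hF hG q x = C (F x) (G q) := rfl

lemma psi_tendsto_atBot (hC : IsCopula C) (hF : IsDistFun F) (hG : IsDistFun G) (q : ℚ) :
    Tendsto (psi hC hF hG q) atBot (nhds 0) := by
  apply squeeze_zero (fun x => c_nonneg hC (hF.2.2.1 x) (hG.2.2.1 q))
    (g := F) _ hF.2.2.2.1
  intro x
  have h1 := mono_v hC (hF.2.2.1 x) (hG.2.2.1 q) ⟨zero_le_one, le_refl 1⟩ (hG.2.2.1 q).2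
  have h2 := (hC.2.1 (F x) (hF.2.2.1 x)).2
  simpa [psi] using h1.trans_eq h2

lemma psi_tendsto_atTop (hC : IsCopula C) (hF : IsDistFun F) (hG : IsDistFun G) (q : ℚ) :
    Tendsto (psi hC hF hG q) atTop (nhds (G q)) := by
  have hone : (1:ℝ) ∈ Icc (0:ℝ) 1 := ⟨zero_le_one, le_refl 1⟩
  have hC1 : ∀ v ∈ Icc (0:ℝ) 1, C 1 v = v := fun v hv => (hC.2.2.1 v hv).2
  have hlow : ∀ x, G (q:ℝ) - (1 - F x) ≤ psi hC hF hG q x := by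
    intro x
    have := lip_u hC (hF.2.2.1 x) hone (hG.2.2.1 q) (hF.2.2.1 x).2
    have e := hC1 (G q) (hG.2.2.1 q)
    simp only [psi_apply]
    linarith
  have hhigh : ∀ x, psi hC hF hG q x ≤ G (q:ℝ) := by
    intro x
    have := mono_u hC (hF.2.2.1 x) hone (hG.2.2.1 q) (hF.2.2.1 x).2
    have e := hC1 (G q) (hG.2.2.1 q)
    simp only [psi_apply]
    linarith
  have h2 : Tendsto (fun x => G (q:ℝ) - (1 - F x)) atTop (nhds (G (q:ℝ))) := by
    have : Tendsto (fun x => (1:ℝ) - F x) atTop (nhds 0) := by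
      simpa using (tendsto_const_nhds (x := (1:ℝ))).sub hF.2.2.2.2
    simpa using (tendsto_const_nhds (x := G (q:ℝ))).sub this
  exact tendsto_of_tendsto_of_tendsto_of_le_of_le h2 tendsto_const_nhds hlow hhigh

/-- The difference of two Stieltjes functions with dominated increments. -/
def sdiff (f g : StieltjesFunction ℝ) (h : ∀ a b : ℝ, a ≤ b → f b - f a ≤ g b - g a) :
    StieltjesFunction ℝ where
  toFun := fun x => g x - f x
  mono' := fun a b hab => by have := h a b hab; simp only []; linarith
  right_continuous' := fun x => (g.right_continuous x).sub (f.right_continuous x)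

lemma sdiff_spec (f g : StieltjesFunction ℝ) (h : ∀ a b : ℝ, a ≤ b → f b - f a ≤ g b - g a) :
    g.measure = f.measure + (sdiff f g h).measure := by
  refine MeasureTheory.Measure.ext_of_Ioc _ _ (fun a b hab => ?_)
  rw [Measure.add_apply, StieltjesFunction.measure_Ioc, StieltjesFunction.measure_Ioc,
    StieltjesFunction.measure_Ioc, ← ENNReal.ofReal_add (sub_nonneg.2 (f.mono hab.le))
      (sub_nonneg.2 ((sdiff f g h).mono hab.le))]
  congr 1
  show g b - g a = f b - f a + (g b - f b - (g a - f a))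
  ring

lemma measure_le (f g : StieltjesFunction ℝ) (h : ∀ a b : ℝ, a ≤ b → f b - f a ≤ g b - g a) :
    f.measure ≤ g.measure := by
  rw [sdiff_spec f g h]
  exact Measure.le_add_right le_rfl

end SklarAux

open SklarAux ProbabilityTheory

/-- **Converse part of Sklar's theorem**: given a copula `C` and univariate distribution
functions `F, G`, there is a probability measure `μ` on `ℝ²` whose joint distribution
function is `C(F(x), G(y))` and whose marginal distribution functions are `F` and `G`. -/
theorem sklar_converse (C : ℝ → ℝ → ℝ) (hC : IsCopula C)
    (F G : ℝ → ℝ) (hF : IsDistFun F) (hG : IsDistFun G) :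
    ∃ μ : Measure (ℝ × ℝ), IsProbabilityMeasure μ ∧
      (∀ x y : ℝ, (μ (Iic x ×ˢ Iic y)).toReal = C (F x) (G y)) ∧
      (∀ x : ℝ, ((μ.map Prod.fst) (Iic x)).toReal = F x) ∧
      (∀ y : ℝ, ((μ.map Prod.snd) (Iic y)).toReal = G y) := by
  classical
  have F01 := hF.2.2.1
  have G01 := hG.2.2.1
  set μF : Measure ℝ := (distSF hF).measure with hμFdef
  haveI hμFprob : IsProbabilityMeasure μF :=
    (distSF hF).isProbabilityMeasure hF.2.2.2.1 hF.2.2.2.2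
  set M : ℚ → Measure ℝ := fun q => (psi hC hF hG q).measure with hMdef
  have hincr : ∀ q : ℚ, ∀ a b : ℝ, a ≤ b →
      psi hC hF hG q b - psi hC hF hG q a ≤ distSF hF b - distSF hF a :=
    fun q a b hab => lip_u hC (F01 a) (F01 b) (G01 (q:ℝ)) (hF.1 hab)
  have hMle : ∀ q, M q ≤ μF := fun q => measure_le _ _ (hincr q)
  have hMfin : ∀ q, IsFiniteMeasure (M q) := fun q =>
    (psi hC hF hG q).isFiniteMeasure (psi_tendsto_atBot hC hF hG q) (psi_tendsto_atTop hC hF hG q)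
  have hMIic : ∀ (q : ℚ) (x : ℝ), M q (Iic x) = ENNReal.ofReal (C (F x) (G (q:ℝ))) := by
    intro q x
    rw [hMdef]
    rw [(psi hC hF hG q).measure_Iic (psi_tendsto_atBot hC hF hG q) x]
    simp
  have hMuniv : ∀ q : ℚ, M q univ = ENNReal.ofReal (G (q:ℝ)) := by
    intro q
    rw [hMdef]
    rw [(psi hC hF hG q).measure_univ (psi_tendsto_atBot hC hF hG q) (psi_tendsto_atTop hC hF hG q)]
    simp
  set ρ : ℚ → ℝ → ℝ≥0∞ := fun q => (M q).rnDeriv μF with hρdef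
  have hρmeas : ∀ q, Measurable (ρ q) := fun q => Measure.measurable_rnDeriv _ _
  have hInt : ∀ (q : ℚ) (s : Set ℝ), ∫⁻ x in s, ρ q x ∂μF = M q s := by
    intro q s
    haveI := hMfin q
    exact Measure.setLIntegral_rnDeriv (Measure.absolutelyContinuous_of_le (hMle q)) s
  have hIntTot : ∀ q : ℚ, ∫⁻ x, ρ q x ∂μF = ENNReal.ofReal (G (q:ℝ)) := by
    intro q
    haveI := hMfin q
    rw [Measure.lintegral_rnDeriv (Measure.absolutelyContinuous_of_le (hMle q))]
    exact hMuniv q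
  have hρ1 : ∀ q, ρ q ≤ᵐ[μF] 1 := fun q => Measure.rnDeriv_le_one_of_le (hMle q)
  have hρmono : ∀ q q' : ℚ, q ≤ q' → ρ q ≤ᵐ[μF] ρ q' := by
    intro q q' hqq'
    haveI := hMfin q
    haveI := hMfin q'
    have hinc : ∀ a b : ℝ, a ≤ b →
        psi hC hF hG q b - psi hC hF hG q a ≤ psi hC hF hG q' b - psi hC hF hG q' a := by
      intro a b hab
      have := hC.2.2.2 (F a) (F01 a) (F b) (F01 b) (G (q:ℝ)) (G01 (q:ℝ)) (G (q':ℝ)) (G01 (q':ℝ))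
        (hF.1 hab) (hG.1 (by exact_mod_cast hqq'))
      simp only [psi_apply]
      linarith
    have hdec := sdiff_spec _ _ hinc
    haveI : IsFiniteMeasure (SklarAux.sdiff _ _ hinc).measure := by
      constructor
      have h1 : (psi hC hF hG q').measure univ
          = (psi hC hF hG q).measure univ + (SklarAux.sdiff _ _ hinc).measure univ := by
        rw [hdec]; simp [Measure.add_apply]
      have h2 : (psi hC hF hG q').measure univ < ⊤ := (hMfin q').measure_univ_lt_top
      rw [h1] at h2
      exact lt_of_le_of_lt le_add_self h2
    have hadd := Measure.rnDeriv_add (M q) (SklarAux.sdiff _ _ hinc).measure μF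
    rw [← hdec] at hadd
    filter_upwards [hadd] with x hx
    rw [hρdef]
    show (M q).rnDeriv μF x ≤ (M q').rnDeriv μF x
    rw [show M q' = (psi hC hF hG q').measure from rfl, hx]
    exact le_self_add
  have haemono : ∀ᵐ x ∂μF, ∀ q q' : ℚ, q ≤ q' → ρ q x ≤ ρ q' x := by
    rw [ae_all_iff]
    intro q
    rw [ae_all_iff]
    intro q'
    by_cases h : q ≤ q'
    · filter_upwards [hρmono q q' h] with x hx _
      exact hx
    · filter_upwards with x hx
      exact absurd hx h
  have hae1 : ∀ᵐ x ∂μF, ∀ q : ℚ, ρ q x ≤ 1 := ae_all_iff.2 fun q => hρ1 q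
  -- the sup over naturals is 1 a.e.
  have hsup : ∀ᵐ x ∂μF, (⨆ n : ℕ, ρ (n : ℚ) x) = 1 := by
    set T : ℝ → ℝ≥0∞ := fun x => ⨆ n : ℕ, ρ (n : ℚ) x with hTdef
    have hTmeas : Measurable T := Measurable.iSup fun n => hρmeas _
    have hTle : T ≤ᵐ[μF] 1 := by
      filter_upwards [hae1] with x hx
      exact iSup_le fun n => hx _
    have hTint : ∫⁻ x, T x ∂μF = 1 := by
      rw [hTdef]
      rw [lintegral_iSup' (fun n => (hρmeas _).aemeasurable)
        (haemono.mono fun x hx i j hij => hx _ _ (by exact_mod_cast hij))]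
      simp_rw [hIntTot]
      refine iSup_eq_of_tendsto
        (fun i j hij => ENNReal.ofReal_le_ofReal (hG.1 (by exact_mod_cast hij))) ?_
      have hcast : Tendsto (fun n : ℕ => (((n:ℚ) : ℚ) : ℝ)) atTop atTop := by
        simpa using tendsto_natCast_atTop_atTop (R := ℝ)
      have := hG.2.2.2.2.comp hcast
      have h2 := ENNReal.tendsto_ofReal this
      simpa using h2
    have hsub : ∫⁻ x, ((1:ℝ≥0∞) - T x) ∂μF = 0 := by
      have heq : ∫⁻ x, ((1:ℝ≥0∞) - T x) ∂μF
          = (∫⁻ _, (1:ℝ≥0∞) ∂μF) - ∫⁻ x, T x ∂μF :=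
        lintegral_sub hTmeas (by rw [hTint]; exact ENNReal.one_ne_top) hTle
      rw [heq, hTint, lintegral_one, measure_univ, tsub_self]
    have h0 := (lintegral_eq_zero_iff (measurable_const.sub hTmeas)).1 hsub
    filter_upwards [h0, hTle] with x h1 h2
    have h1' : (1:ℝ≥0∞) - T x = 0 := h1
    exact le_antisymm h2 (tsub_eq_zero_iff_le.1 h1')
  -- the inf over negative integers is 0 a.e.
  have hinf : ∀ᵐ x ∂μF, (⨅ n : ℕ, ρ (-(n : ℚ)) x) = 0 := by
    have hImeas : Measurable fun x => ⨅ n : ℕ, ρ (-(n:ℚ)) x :=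
      Measurable.iInf fun n => hρmeas _
    have hint : ∫⁻ x, (⨅ n : ℕ, ρ (-(n:ℚ)) x) ∂μF = 0 := by
      refine le_antisymm ?_ zero_le
      have hle : ∀ n : ℕ, ∫⁻ x, (⨅ m : ℕ, ρ (-(m:ℚ)) x) ∂μF ≤ ENNReal.ofReal (G ((-(n:ℚ) : ℚ) : ℝ)) := by
        intro n
        rw [← hIntTot (-(n:ℚ))]
        exact lintegral_mono fun x => iInf_le _ n
      have hcast : Tendsto (fun n : ℕ => ((-(n:ℚ) : ℚ) : ℝ)) atTop atBot := by
        have : Tendsto (fun n : ℕ => -(n:ℝ)) atTop atBot :=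
          tendsto_neg_atTop_atBot.comp (tendsto_natCast_atTop_atTop (R := ℝ))
        simpa using this
      have hG0 := hG.2.2.2.1.comp hcast
      have h2 := ENNReal.tendsto_ofReal hG0
      have htends : Tendsto (fun n : ℕ => ENNReal.ofReal (G ((-(n:ℚ) : ℚ) : ℝ))) atTop (nhds 0) := by
        simpa using h2
      exact ge_of_tendsto' htends hle
    have := (lintegral_eq_zero_iff hImeas).1 hint
    filter_upwards [this] with x hx
    exact hx
  -- right-continuity in the rational variable, a.e.
  have hinfgt : ∀ t : ℚ, ∀ᵐ x ∂μF, (⨅ r : Ioi t, ρ (r : ℚ) x) = ρ t x := by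
    intro t
    haveI : Nonempty (Ioi t) := ⟨⟨t+1, by simp⟩⟩
    set J : ℝ → ℝ≥0∞ := fun x => ⨅ r : Ioi t, ρ (r:ℚ) x with hJdef
    have hJmeas : Measurable J := Measurable.iInf fun r => hρmeas _
    have hge : ∀ᵐ x ∂μF, ρ t x ≤ J x := by
      have h := ae_all_iff.2 fun r : Ioi t => hρmono t r (le_of_lt r.2)
      filter_upwards [h] with x hx
      exact le_iInf fun r => hx r
    have hJle : ∫⁻ x, J x ∂μF ≤ ENNReal.ofReal (G (t:ℝ)) := by
      refine ENNReal.le_of_forall_pos_le_add fun ε hε _ => ?_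
      have hcont := hG.2.1 (t:ℝ)
      have hev : ∀ᶠ z in nhdsWithin (t:ℝ) (Ici (t:ℝ)), G z < G (t:ℝ) + ε :=
        hcont.eventually_lt_const (lt_add_of_pos_right _ (by exact_mod_cast hε))
      obtain ⟨δ, hδpos, hδ⟩ := Metric.mem_nhdsWithin_iff.1 hev
      obtain ⟨r, hr1, hr2⟩ := exists_rat_btwn (show (t:ℝ) < t + δ by linarith)
      have hrt : t < r := by exact_mod_cast hr1
      have hGr : G (r:ℝ) < G (t:ℝ) + ε := by
        apply hδ
        constructor
        · rw [Metric.mem_ball, Real.dist_eq, abs_of_pos (by linarith)]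
          linarith
        · exact le_of_lt hr1
      calc ∫⁻ x, J x ∂μF ≤ ∫⁻ x, ρ r x ∂μF :=
            lintegral_mono fun x => iInf_le (fun r : Ioi t => ρ (r:ℚ) x) ⟨r, hrt⟩
        _ = ENNReal.ofReal (G (r:ℝ)) := hIntTot r
        _ ≤ ENNReal.ofReal (G (t:ℝ) + ε) := ENNReal.ofReal_le_ofReal (le_of_lt hGr)
        _ ≤ ENNReal.ofReal (G (t:ℝ)) + ENNReal.ofReal (ε:ℝ) := ENNReal.ofReal_add_le
        _ = ENNReal.ofReal (G (t:ℝ)) + ε := by rw [ENNReal.ofReal_coe_nnreal]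
    have hsub : ∫⁻ x, (J x - ρ t x) ∂μF = 0 := by
      rw [lintegral_sub (hρmeas t) (by rw [hIntTot t]; exact ENNReal.ofReal_ne_top) hge]
      rw [hIntTot t]
      exact tsub_eq_zero_of_le hJle
    have h0 := (lintegral_eq_zero_iff (hJmeas.sub (hρmeas t))).1 hsub
    filter_upwards [h0, hge] with x h1 h2
    have h1' : J x - ρ t x = 0 := h1
    exact le_antisymm (tsub_eq_zero_iff_le.1 h1') h2
  -- the rational CDF candidate
  set f : ℝ → ℚ → ℝ := fun x q => (ρ q x).toReal with hfdef
  have hf_meas : Measurable f :=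
    measurable_pi_lambda _ fun q => (hρmeas q).ennreal_toReal
  have hgood : ∀ᵐ x ∂μF, (∀ q, ρ q x ≠ ∞) ∧ ProbabilityTheory.IsRatStieltjesPoint f x := by
    filter_upwards [haemono, hae1, hsup, hinf, ae_all_iff.2 hinfgt]
      with x hmono h1 hsupx hinfx hinfgtx
    have hfin : ∀ q, ρ q x ≠ ∞ := fun q => ((h1 q).trans_lt ENNReal.one_lt_top).ne
    refine ⟨hfin, ?_⟩
    have hmonof : Monotone (f x) := fun q q' h => ENNReal.toReal_mono (hfin q') (hmono q q' h)
    have hble : ∀ q, f x q ≤ 1 := fun q => by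
      simpa using ENNReal.toReal_mono ENNReal.one_ne_top (h1 q)
    have hb0 : ∀ q, 0 ≤ f x q := fun q => ENNReal.toReal_nonneg
    refine ⟨hmonof, ?_, ?_, ?_⟩
    · have hbdd : BddAbove (range (f x)) := ⟨1, by rintro y ⟨q, rfl⟩; exact hble q⟩
      have ht := tendsto_atTop_ciSup hmonof hbdd
      have h1' : (⨆ q : ℚ, f x q) = 1 := by
        refine le_antisymm (ciSup_le hble) ?_
        have h2 : (1:ℝ≥0∞).toReal = ⨆ n : ℕ, (ρ ((n:ℚ)) x).toReal := by
          rw [← hsupx]; exact ENNReal.toReal_iSup fun n => hfin _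
        have h3 : (1:ℝ) = ⨆ n : ℕ, f x (n:ℚ) := by simpa using h2
        rw [h3]
        exact ciSup_le fun n => le_ciSup hbdd ((n:ℕ):ℚ)
      rwa [h1'] at ht
    · have hbdd : BddBelow (range (f x)) := ⟨0, by rintro y ⟨q, rfl⟩; exact hb0 q⟩
      have ht := tendsto_atBot_ciInf hmonof hbdd
      have h0 : (⨅ q : ℚ, f x q) = 0 := by
        refine le_antisymm ?_ (le_ciInf hb0)
        have h2 : (0:ℝ≥0∞).toReal = ⨅ n : ℕ, (ρ (-(n:ℚ)) x).toReal := by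
          rw [← hinfx]; exact ENNReal.toReal_iInf fun n => hfin _
        have h3 : (0:ℝ) = ⨅ n : ℕ, f x (-(n:ℚ)) := by simpa using h2
        rw [h3]
        exact le_ciInf fun n => ciInf_le hbdd (-(n:ℚ))
      rwa [h0] at ht
    · intro t
      haveI : Nonempty (Ioi t) := ⟨⟨t+1, by simp⟩⟩
      have h2 : (ρ t x).toReal = ⨅ r : Ioi t, (ρ (r:ℚ) x).toReal := by
        rw [← hinfgtx t]; exact ENNReal.toReal_iInf fun r => hfin _
      exact h2.symm
  -- the kernel
  set κ : ProbabilityTheory.Kernel ℝ ℝ :=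
    ⟨fun x => (ProbabilityTheory.stieltjesOfMeasurableRat f hf_meas x).measure,
      ProbabilityTheory.measurable_measure_stieltjesOfMeasurableRat hf_meas⟩ with hκdef
  have hκapp : ∀ x, κ x = (ProbabilityTheory.stieltjesOfMeasurableRat f hf_meas x).measure :=
    fun x => rfl
  haveI : ProbabilityTheory.IsMarkovKernel κ := by
    refine ⟨fun x => ⟨?_⟩⟩
    rw [hκapp x]
    exact ProbabilityTheory.measure_stieltjesOfMeasurableRat_univ hf_meas x
  have hκIic : ∀ᵐ x ∂μF, ∀ q : ℚ, κ x (Iic (q:ℝ)) = ρ q x := by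
    filter_upwards [hgood] with x hx q
    obtain ⟨hfin, hpt⟩ := hx
    rw [hκapp x, ProbabilityTheory.measure_stieltjesOfMeasurableRat_Iic]
    have he : ProbabilityTheory.stieltjesOfMeasurableRat f hf_meas x q = f x q := by
      rw [ProbabilityTheory.stieltjesOfMeasurableRat_eq]
      exact ProbabilityTheory.toRatCDF_of_isRatStieltjesPoint hpt q
    rw [he]
    exact ENNReal.ofReal_toReal (hfin q)
  -- the candidate measure
  set μ : Measure (ℝ × ℝ) := μF.compProd κ with hμdef
  haveI hμprob : IsProbabilityMeasure μ := by
    rw [hμdef]; infer_instance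
  -- joint values at rational second coordinate
  have hkey : ∀ (s : Set ℝ), MeasurableSet s → ∀ q : ℚ, μ (s ×ˢ Iic ((q:ℚ):ℝ)) = M q s := by
    intro s hs q
    rw [hμdef, Measure.compProd_apply_prod hs measurableSet_Iic]
    rw [← hInt q s]
    refine lintegral_congr_ae (ae_restrict_of_ae ?_)
    filter_upwards [hκIic] with x hx
    exact hx q
  -- extension to real second coordinate
  have hext : ∀ (s : Set ℝ), MeasurableSet s → ∀ (h : ℝ → ℝ), Monotone h →
      (∀ z, ContinuousWithinAt h (Ici z) z) →
      (∀ q : ℚ, μ (s ×ˢ Iic ((q:ℚ):ℝ)) = ENNReal.ofReal (h (q:ℝ))) →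
      ∀ y : ℝ, μ (s ×ˢ Iic y) = ENNReal.ofReal (h y) := by
    intro s hs h hmono hrc hq y
    obtain ⟨q₀, hq₀⟩ := exists_rat_gt y
    haveI : Nonempty {q : ℚ // y < (q:ℝ)} := ⟨⟨q₀, hq₀⟩⟩
    have hIic : ⋂ r : {q : ℚ // y < (q:ℝ)}, Iic ((r : ℚ) : ℝ) = Iic y := by
      ext z
      simp only [mem_iInter, mem_Iic]
      constructor
      · intro hz
        by_contra hz'
        push_neg at hz'
        obtain ⟨r, hr1, hr2⟩ := exists_rat_btwn hz'
        exact absurd (hz ⟨r, hr1⟩) (not_le.2 hr2)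
      · intro hz r
        exact hz.trans (le_of_lt r.2)
    have hset : ⋂ r : {q : ℚ // y < (q:ℝ)}, (s ×ˢ Iic ((r : ℚ) : ℝ)) = s ×ˢ Iic y := by
      rw [← prod_iInter, hIic]
    have hdir : Directed (· ⊇ ·) fun r : {q : ℚ // y < (q:ℝ)} => s ×ˢ Iic ((r : ℚ) : ℝ) := by
      intro a b
      refine ⟨⟨min a.1 b.1, ?_⟩, ?_, ?_⟩
      · push_cast
        exact lt_min a.2 b.2
      · exact prod_mono subset_rfl (Iic_subset_Iic.2 (by push_cast; exact min_le_left _ _))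
      · exact prod_mono subset_rfl (Iic_subset_Iic.2 (by push_cast; exact min_le_right _ _))
    have hmeas : ∀ r : {q : ℚ // y < (q:ℝ)},
        NullMeasurableSet (s ×ˢ Iic ((r : ℚ) : ℝ)) μ :=
      fun r => (hs.prod measurableSet_Iic).nullMeasurableSet
    have hiInf := Directed.measure_iInter (μ := μ) hmeas hdir
      ⟨⟨q₀, hq₀⟩, measure_ne_top μ _⟩
    rw [hset] at hiInf
    rw [hiInf]
    have hterm : ∀ r : {q : ℚ // y < (q:ℝ)},
        μ (s ×ˢ Iic ((r : ℚ) : ℝ)) = ENNReal.ofReal (h ((r:ℚ):ℝ)) := fun r => hq r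
    simp_rw [hterm]
    refine le_antisymm ?_ (le_iInf fun r => ENNReal.ofReal_le_ofReal (hmono (le_of_lt r.2)))
    refine ENNReal.le_of_forall_pos_le_add fun ε hε _ => ?_
    have hev : ∀ᶠ z in nhdsWithin y (Ici y), h z < h y + ε :=
      (hrc y).eventually_lt_const (lt_add_of_pos_right _ (by exact_mod_cast hε))
    obtain ⟨δ, hδpos, hδ⟩ := Metric.mem_nhdsWithin_iff.1 hev
    obtain ⟨r, hr1, hr2⟩ := exists_rat_btwn (show y < y + δ by linarith)
    have hhr : h (r:ℝ) < h y + ε := by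
      apply hδ
      constructor
      · rw [Metric.mem_ball, Real.dist_eq, abs_of_pos (by linarith)]
        linarith
      · exact le_of_lt hr1
    calc (⨅ r : {q : ℚ // y < (q:ℝ)}, ENNReal.ofReal (h ((r:ℚ):ℝ)))
        ≤ ENNReal.ofReal (h ((r:ℚ):ℝ)) := iInf_le (fun r : {q : ℚ // y < (q:ℝ)} => ENNReal.ofReal (h ((r:ℚ):ℝ))) ⟨r, hr1⟩
      _ ≤ ENNReal.ofReal (h y + ε) := ENNReal.ofReal_le_ofReal (le_of_lt hhr)
      _ ≤ ENNReal.ofReal (h y) + ENNReal.ofReal (ε:ℝ) := ENNReal.ofReal_add_le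
      _ = ENNReal.ofReal (h y) + ε := by rw [ENNReal.ofReal_coe_nnreal]
  -- joint distribution function
  have hjoint : ∀ x y : ℝ, μ (Iic x ×ˢ Iic y) = ENNReal.ofReal (C (F x) (G y)) := by
    intro x y
    refine hext (Iic x) measurableSet_Iic (fun z => C (F x) (G z))
      (fun a b hab => mono_v hC (F01 x) (G01 a) (G01 b) (hG.1 hab))
      (cont_comp' hC hG (F01 x)) (fun q => ?_) y
    rw [hkey (Iic x) measurableSet_Iic q, hMIic q x]
  have hmarg2 : ∀ y : ℝ, μ (univ ×ˢ Iic y) = ENNReal.ofReal (G y) := by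
    intro y
    refine hext univ MeasurableSet.univ G hG.1 hG.2.1 (fun q => ?_) y
    rw [hkey univ MeasurableSet.univ q, hMuniv q]
  refine ⟨μ, hμprob, ?_, ?_, ?_⟩
  · intro x y
    rw [hjoint x y, ENNReal.toReal_ofReal (c_nonneg hC (F01 x) (G01 y))]
  · intro x
    have hfst : μ.map Prod.fst = μF := by
      rw [hμdef]
      exact Measure.fst_compProd μF κ
    rw [hfst, hμFdef, (distSF hF).measure_Iic hF.2.2.2.1 x]
    simp [ENNReal.toReal_ofReal (F01 x).1]
  · intro y
    have hpre : Prod.snd ⁻¹' Iic y = (univ : Set ℝ) ×ˢ Iic y := by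
      ext p; simp
    rw [Measure.map_apply measurable_snd measurableSet_Iic, hpre, hmarg2 y,
      ENNReal.toReal_ofReal (G01 y).1]
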